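/- Let B be a complex unital Banach algebra, w₁ ≠ w₂ ∈ ℂ, and U₁, U₂ disjoint open neighborhoods of w₁ and w₂ respectively. Suppose R : (U₁ ∪ U₂) \ {w₁, w₂} → B satisfies the resolvent equation on (U₁ ∪ U₂) \ {w₁, w₂}, and that there are m, n ≥ 1, elements b₁, …, b_m ∈ B and c₁, …, c_n ∈ B, and holomorphic functions S₁ : U₁ → B, S₂ : U₂ → B with R(z) = Σ_{k=1}^{m} b_k·(z−w₁)^{−k} + S₁(z) for z ∈ U₁ \ {w₁} and R(z) = Σ_{l=1}^{n} c_l·(z−w₂)^{−l} + S₂(z) for z ∈ U₂ \ {w₂}. Then b_k·c_l = 0 for all 1 ≤ k ≤ m and 1 ≤ l ≤ n. -/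

import Mathlib

open Metric Complex MeasureTheory Set Finset


/-- A function `R` from a subset `S ⊆ ℂ` into a complex algebra satisfies the resolvent
equation on `S` if `R z₁ - R z₂ = (z₂ - z₁) • (R z₁ * R z₂)` for all `z₁, z₂ ∈ S`. -/
def ResolventEq {B : Type*} [Ring B] [Algebra ℂ B] (S : Set ℂ) (R : ℂ → B) : Prop :=
  ∀ z₁ ∈ S, ∀ z₂ ∈ S, R z₁ - R z₂ = (z₂ - z₁) • (R z₁ * R z₂)

section Aux

variable {E : Type*} [NormedAddCommGroup E] [NormedSpace ℂ E]

lemma circleIntegral_finset_sum {ι : Type*} (s : Finset ι) (f : ι → ℂ → E) (c : ℂ) (r : ℝ)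
    (h : ∀ i ∈ s, CircleIntegrable (f i) c r) :
    (∮ z in C(c, r), ∑ i ∈ s, f i z) = ∑ i ∈ s, ∮ z in C(c, r), f i z := by
  simp only [circleIntegral, Finset.smul_sum]
  exact intervalIntegral.integral_finset_sum fun i hi => (h i hi).out

variable {B : Type*} [NormedRing B] [NormedAlgebra ℂ B] [CompleteSpace B]

lemma mul_circleIntegral (a : B) (f : ℂ → B) (c : ℂ) (r : ℝ) (hf : CircleIntegrable f c r) :
    (a * ∮ z in C(c, r), f z) = ∮ z in C(c, r), a * f z := by
  have h := (ContinuousLinearMap.mul ℂ B a).intervalIntegral_comp_comm hf.out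
  simp only [ContinuousLinearMap.mul_apply'] at h
  simp only [circleIntegral, ← h, mul_smul_comm]

lemma circleIntegral_mul (a : B) (f : ℂ → B) (c : ℂ) (r : ℝ) (hf : CircleIntegrable f c r) :
    (∮ z in C(c, r), f z) * a = ∮ z in C(c, r), f z * a := by
  have h := ((ContinuousLinearMap.mul ℂ B).flip a).intervalIntegral_comp_comm hf.out
  simp only [ContinuousLinearMap.flip_apply, ContinuousLinearMap.mul_apply'] at h
  simp only [circleIntegral, ← h, smul_mul_assoc]

lemma circleIntegral_swap (c₁ c₂ : ℂ) (r₁ r₂ : ℝ) (F : ℂ → ℂ → E)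
    (hF : Continuous (fun p : ℝ × ℝ => F (circleMap c₁ r₁ p.2) (circleMap c₂ r₂ p.1))) :
    (∮ w in C(c₂, r₂), ∮ z in C(c₁, r₁), F z w) = ∮ z in C(c₁, r₁), ∮ w in C(c₂, r₂), F z w := by
  have hG : Continuous (fun p : ℝ × ℝ =>
      deriv (circleMap c₂ r₂) p.1 • deriv (circleMap c₁ r₁) p.2 •
        F (circleMap c₁ r₁ p.2) (circleMap c₂ r₂ p.1)) := by
    simp only [deriv_circleMap]
    have h1 : Continuous (fun p : ℝ × ℝ => circleMap 0 r₂ p.1 * I) :=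
      ((continuous_circleMap 0 r₂).comp continuous_fst).mul continuous_const
    have h2 : Continuous (fun p : ℝ × ℝ => circleMap 0 r₁ p.2 * I) :=
      ((continuous_circleMap 0 r₁).comp continuous_snd).mul continuous_const
    exact h1.smul (h2.smul hF)
  have hint : Integrable (Function.uncurry fun (φ θ : ℝ) =>
      deriv (circleMap c₂ r₂) φ • deriv (circleMap c₁ r₁) θ •
        F (circleMap c₁ r₁ θ) (circleMap c₂ r₂ φ))
      ((volume.restrict (Ioc 0 (2 * Real.pi))).prod (volume.restrict (Ioc 0 (2 * Real.pi)))) := by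
    rw [Measure.prod_restrict]
    exact ((hG.continuousOn).integrableOn_compact (isCompact_Icc.prod isCompact_Icc)).mono_set
      (Set.prod_mono Set.Ioc_subset_Icc_self Set.Ioc_subset_Icc_self)
  calc (∮ w in C(c₂, r₂), ∮ z in C(c₁, r₁), F z w)
      = ∫ φ in Ioc (0:ℝ) (2 * Real.pi), ∫ θ in Ioc (0:ℝ) (2 * Real.pi),
          deriv (circleMap c₂ r₂) φ • deriv (circleMap c₁ r₁) θ •
            F (circleMap c₁ r₁ θ) (circleMap c₂ r₂ φ) := by
        rw [circleIntegral, intervalIntegral.integral_of_le Real.two_pi_pos.le]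
        refine setIntegral_congr_fun measurableSet_Ioc fun φ _ => ?_
        rw [circleIntegral, intervalIntegral.integral_of_le Real.two_pi_pos.le,
          ← MeasureTheory.integral_smul]
    _ = ∫ θ in Ioc (0:ℝ) (2 * Real.pi), ∫ φ in Ioc (0:ℝ) (2 * Real.pi),
          deriv (circleMap c₂ r₂) φ • deriv (circleMap c₁ r₁) θ •
            F (circleMap c₁ r₁ θ) (circleMap c₂ r₂ φ) :=
        MeasureTheory.integral_integral_swap hint
    _ = ∮ z in C(c₁, r₁), ∮ w in C(c₂, r₂), F z w := by
        rw [circleIntegral, intervalIntegral.integral_of_le Real.two_pi_pos.le]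
        refine setIntegral_congr_fun measurableSet_Ioc fun θ _ => ?_
        rw [circleIntegral, intervalIntegral.integral_of_le Real.two_pi_pos.le,
          ← MeasureTheory.integral_smul]
        refine setIntegral_congr_fun measurableSet_Ioc fun φ _ => ?_
        rw [smul_comm]

end Aux



section Extract

variable {B : Type*} [NormedRing B] [NormedAlgebra ℂ B] [CompleteSpace B]

lemma sphere_subset_diff {w : ℂ} {U : Set ℂ} {r : ℝ} (hr : 0 < r)
    (hball : closedBall w r ⊆ U) : sphere w r ⊆ U \ {w} := by
  intro z hz
  refine ⟨hball (sphere_subset_closedBall hz), ?_⟩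
  simp only [Set.mem_singleton_iff]
  rintro rfl
  rw [mem_sphere, dist_self] at hz
  exact hr.ne' hz.symm

lemma circleIntegral_add' {E : Type*} [NormedAddCommGroup E] [NormedSpace ℂ E]
    {f g : ℂ → E} {c : ℂ} {r : ℝ} (hf : CircleIntegrable f c r)
    (hg : CircleIntegrable g c r) :
    (∮ z in C(c, r), (f z + g z)) = (∮ z in C(c, r), f z) + ∮ z in C(c, r), g z := by
  simp only [circleIntegral, smul_add, intervalIntegral.integral_add hf.out hg.out]

lemma continuousOn_laurent {m : ℕ} {b : ℕ → B} {S : ℂ → B} {U : Set ℂ} {w : ℂ}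
    (hS : DifferentiableOn ℂ S U) (R : ℂ → B)
    (hR : ∀ z ∈ U \ {w}, R z = (∑ j ∈ Finset.Icc 1 m, ((z - w) ^ j)⁻¹ • b j) + S z) :
    ContinuousOn R (U \ {w}) := by
  have h : ContinuousOn (fun z => (∑ j ∈ Finset.Icc 1 m, ((z - w) ^ j)⁻¹ • b j) + S z)
      (U \ {w}) := by
    refine ContinuousOn.add ?_ (hS.continuousOn.mono Set.diff_subset)
    refine continuousOn_finset_sum _ fun j _ => ContinuousOn.smul ?_ continuousOn_const
    refine ContinuousOn.inv₀ (((continuous_id.sub continuous_const).pow j).continuousOn) ?_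
    intro z hz
    exact pow_ne_zero _ (sub_ne_zero.2 fun h => hz.2 (by simp [h]))
  exact h.congr hR

lemma coeff_extract {w : ℂ} {U : Set ℂ} (hU : IsOpen U) {m : ℕ} {b : ℕ → B} {S : ℂ → B}
    (hS : DifferentiableOn ℂ S U) (R : ℂ → B)
    (hR : ∀ z ∈ U \ {w}, R z = (∑ j ∈ Finset.Icc 1 m, ((z - w) ^ j)⁻¹ • b j) + S z)
    {r : ℝ} (hr : 0 < r) (hball : closedBall w r ⊆ U)
    {k : ℕ} (hk1 : 1 ≤ k) (hkm : k ≤ m) :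
    (∮ z in C(w, r), (z - w) ^ (k - 1) • R z) = (2 * Real.pi * Complex.I) • b k := by
  have hsub : sphere w r ⊆ U \ {w} := sphere_subset_diff hr hball
  have hne : ∀ z ∈ sphere w r, z - w ≠ 0 := fun z hz =>
    sub_ne_zero.2 fun h => (hsub hz).2 (by simp [h])
  have hzpow : ∀ e : ℤ, ContinuousOn (fun z => (z - w) ^ e) (sphere w r) := fun e z hz =>
    (((continuousAt_id.sub continuousAt_const)).zpow₀ e (Or.inl (hne z hz))).continuousWithinAt
  have hEq : Set.EqOn (fun z => (z - w) ^ (k - 1) • R z)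
      (fun z => (∑ j ∈ Finset.Icc 1 m, (z - w) ^ ((k : ℤ) - 1 - j) • b j)
        + (z - w) ^ (k - 1) • S z) (sphere w r) := by
    intro z hz
    have hz0 : z - w ≠ 0 := hne z hz
    simp only
    rw [hR z (hsub hz), smul_add, Finset.smul_sum]
    congr 1
    refine Finset.sum_congr rfl fun j hj => ?_
    rw [smul_smul]
    congr 1
    rw [← zpow_natCast (z - w) (k - 1), ← zpow_natCast (z - w) j, ← zpow_neg,
      ← zpow_add₀ hz0]
    congr 1
    omega
  rw [circleIntegral.integral_congr hr.le hEq]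
  have hterm : ∀ j ∈ Finset.Icc 1 m,
      CircleIntegrable (fun z => (z - w) ^ ((k : ℤ) - 1 - j) • b j) w r := fun j _ =>
    ((hzpow _).smul continuousOn_const).circleIntegrable hr.le
  have hsumInt : CircleIntegrable
      (fun z => ∑ j ∈ Finset.Icc 1 m, (z - w) ^ ((k : ℤ) - 1 - j) • b j) w r :=
    (continuousOn_finset_sum _ fun j _ =>
      (hzpow _).smul continuousOn_const).circleIntegrable hr.le
  have hSInt : CircleIntegrable (fun z => (z - w) ^ (k - 1) • S z) w r :=
    ((((continuous_id.sub continuous_const).pow _).continuousOn).smul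
      ((hS.continuousOn.mono hball).mono sphere_subset_closedBall)).circleIntegrable hr.le
  rw [circleIntegral_add' hsumInt hSInt,
    circleIntegral_finset_sum _ _ _ _ hterm]
  have hSzero : (∮ z in C(w, r), (z - w) ^ (k - 1) • S z) = 0 := by
    refine circleIntegral_eq_zero_of_differentiable_on_off_countable hr.le
      Set.countable_empty ?_ ?_
    · exact (((continuous_id.sub continuous_const).pow _).continuousOn).smul
        (hS.continuousOn.mono hball)
    · intro z hz
      exact ((differentiableAt_id.sub_const w).pow _).smul
        (hS.differentiableAt (hU.mem_nhds (hball (ball_subset_closedBall hz.1))))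
  rw [hSzero, add_zero,
    Finset.sum_eq_single_of_mem k (Finset.mem_Icc.mpr ⟨hk1, hkm⟩)]
  · rw [circleIntegral.integral_smul_const]
    congr 1
    have he : ((k : ℤ) - 1 - k) = -1 := by ring
    rw [he]
    simp only [zpow_neg_one]
    exact circleIntegral.integral_sub_center_inv w hr.ne'
  · intro j _ hjk
    rw [circleIntegral.integral_smul_const,
      circleIntegral.integral_sub_zpow_of_ne (by omega : (k : ℤ) - 1 - j ≠ -1), zero_smul]

end Extract

/-- If a function satisfying the resolvent equation has poles of finite
order at two distinct points `w₁ ≠ w₂`, with principal-part coefficients `b_k` at `w₁`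
and `c_l` at `w₂`, then `b_k c_l = 0` for all `1 ≤ k ≤ m`, `1 ≤ l ≤ n`. -/
theorem laurent_coeff_orthogonal_of_two_poles
    (B : Type*) [NormedRing B] [NormedAlgebra ℂ B] [CompleteSpace B]
    (w₁ w₂ : ℂ) (hw : w₁ ≠ w₂)
    (U₁ U₂ : Set ℂ) (hU₁ : IsOpen U₁) (hU₂ : IsOpen U₂)
    (hw₁ : w₁ ∈ U₁) (hw₂ : w₂ ∈ U₂) (hdisj : Disjoint U₁ U₂)
    (m n : ℕ) (hm : 1 ≤ m) (hn : 1 ≤ n)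
    (b c : ℕ → B) (S₁ S₂ : ℂ → B)
    (hS₁ : DifferentiableOn ℂ S₁ U₁) (hS₂ : DifferentiableOn ℂ S₂ U₂)
    (R : ℂ → B)
    (hres : ResolventEq ((U₁ ∪ U₂) \ {w₁, w₂}) R)
    (hR₁ : ∀ z ∈ U₁ \ {w₁},
      R z = (∑ k ∈ Finset.Icc 1 m, ((z - w₁) ^ k)⁻¹ • b k) + S₁ z)
    (hR₂ : ∀ z ∈ U₂ \ {w₂},
      R z = (∑ l ∈ Finset.Icc 1 n, ((z - w₂) ^ l)⁻¹ • c l) + S₂ z) :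
    ∀ k, 1 ≤ k → k ≤ m → ∀ l, 1 ≤ l → l ≤ n → b k * c l = 0 := by
  intro k hk1 hkm l hl1 hln
  obtain ⟨r₁, hr₁, hball₁⟩ : ∃ r > 0, closedBall w₁ r ⊆ U₁ :=
    (Metric.nhds_basis_closedBall.mem_iff).1 (hU₁.mem_nhds hw₁)
  obtain ⟨r₂, hr₂, hball₂⟩ : ∃ r > 0, closedBall w₂ r ⊆ U₂ :=
    (Metric.nhds_basis_closedBall.mem_iff).1 (hU₂.mem_nhds hw₂)
  have hsub₁ : sphere w₁ r₁ ⊆ U₁ \ {w₁} := sphere_subset_diff hr₁ hball₁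
  have hsub₂ : sphere w₂ r₂ ⊆ U₂ \ {w₂} := sphere_subset_diff hr₂ hball₂
  have hRc₁ : ContinuousOn R (U₁ \ {w₁}) := continuousOn_laurent hS₁ R hR₁
  have hRc₂ : ContinuousOn R (U₂ \ {w₂}) := continuousOn_laurent hS₂ R hR₂
  -- points of `U₁` and `U₂` are distinct
  have hne12 : ∀ z ∈ U₁, ∀ w ∈ U₂, w - z ≠ 0 := by
    intro z hz w hwmem h
    rw [sub_eq_zero] at h
    exact Set.disjoint_left.mp hdisj hz (h ▸ hwmem)
  -- membership in the domain of the resolvent identity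
  have hmem₁ : ∀ z ∈ sphere w₁ r₁, z ∈ (U₁ ∪ U₂) \ {w₁, w₂} := by
    intro z hz
    obtain ⟨hzU, hzw⟩ := hsub₁ hz
    refine ⟨Or.inl hzU, ?_⟩
    simp only [Set.mem_insert_iff, Set.mem_singleton_iff, not_or]
    exact ⟨fun h => hzw (by simp [h]),
      fun h => hne12 z hzU w₂ hw₂ (by rw [h, sub_self])⟩
  have hmem₂ : ∀ w ∈ sphere w₂ r₂, w ∈ (U₁ ∪ U₂) \ {w₁, w₂} := by
    intro w hwm
    obtain ⟨hwU, hww⟩ := hsub₂ hwm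
    refine ⟨Or.inr hwU, ?_⟩
    simp only [Set.mem_insert_iff, Set.mem_singleton_iff, not_or]
    exact ⟨fun h => hne12 w₁ hw₁ w hwU (by rw [h, sub_self]),
      fun h => hww (by simp [h])⟩
  -- the two coefficient integrals
  have Hb := coeff_extract hU₁ hS₁ R hR₁ hr₁ hball₁ hk1 hkm
  have Hc := coeff_extract hU₂ hS₂ R hR₂ hr₂ hball₂ hl1 hln
  have hfi : CircleIntegrable (fun z => (z - w₁) ^ (k - 1) • R z) w₁ r₁ :=
    ((((continuous_id.sub continuous_const).pow _).continuousOn).smul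
      (hRc₁.mono hsub₁)).circleIntegrable hr₁.le
  have hgi : CircleIntegrable (fun w => (w - w₂) ^ (l - 1) • R w) w₂ r₂ :=
    ((((continuous_id.sub continuous_const).pow _).continuousOn).smul
      (hRc₂.mono hsub₂)).circleIntegrable hr₂.le
  -- main computation
  have key : (2 * Real.pi * Complex.I : ℂ) • (2 * Real.pi * Complex.I : ℂ) • (b k * c l) =
      ∮ w in C(w₂, r₂), ∮ z in C(w₁, r₁),
        (((z - w₁) ^ (k - 1) * ((w - w₂) ^ (l - 1) * (w - z)⁻¹)) • R z -
          ((z - w₁) ^ (k - 1) * (w - z)⁻¹) • ((w - w₂) ^ (l - 1) • R w)) := by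
    calc (2 * Real.pi * Complex.I : ℂ) • (2 * Real.pi * Complex.I : ℂ) • (b k * c l)
        = ((2 * Real.pi * Complex.I : ℂ) • b k) * ((2 * Real.pi * Complex.I : ℂ) • c l) := by
          rw [smul_mul_assoc, mul_smul_comm]
      _ = (∮ z in C(w₁, r₁), (z - w₁) ^ (k - 1) • R z) *
            (∮ w in C(w₂, r₂), (w - w₂) ^ (l - 1) • R w) := by rw [Hb, Hc]
      _ = ∮ w in C(w₂, r₂), (∮ z in C(w₁, r₁), (z - w₁) ^ (k - 1) • R z) *
            ((w - w₂) ^ (l - 1) • R w) :=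
          mul_circleIntegral _ _ _ _ hgi
      _ = ∮ w in C(w₂, r₂), ∮ z in C(w₁, r₁),
            (((z - w₁) ^ (k - 1) * ((w - w₂) ^ (l - 1) * (w - z)⁻¹)) • R z -
              ((z - w₁) ^ (k - 1) * (w - z)⁻¹) • ((w - w₂) ^ (l - 1) • R w)) := by
          refine circleIntegral.integral_congr hr₂.le fun w hwm => ?_
          calc (∮ z in C(w₁, r₁), (z - w₁) ^ (k - 1) • R z) * ((w - w₂) ^ (l - 1) • R w)
              = (w - w₂) ^ (l - 1) •
                  ((∮ z in C(w₁, r₁), (z - w₁) ^ (k - 1) • R z) * R w) :=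
                mul_smul_comm _ _ _
            _ = (w - w₂) ^ (l - 1) •
                  (∮ z in C(w₁, r₁), ((z - w₁) ^ (k - 1) • R z) * R w) := by
                rw [circleIntegral_mul (R w) _ _ _ hfi]
            _ = ∮ z in C(w₁, r₁), (w - w₂) ^ (l - 1) • (((z - w₁) ^ (k - 1) • R z) * R w) :=
                (circleIntegral.integral_smul _ _ _ _).symm
            _ = ∮ z in C(w₁, r₁),
                  (((z - w₁) ^ (k - 1) * ((w - w₂) ^ (l - 1) * (w - z)⁻¹)) • R z -
                    ((z - w₁) ^ (k - 1) * (w - z)⁻¹) • ((w - w₂) ^ (l - 1) • R w)) := by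
                refine circleIntegral.integral_congr hr₁.le fun z hz => ?_
                have hwz : w - z ≠ 0 := hne12 z (hsub₁ hz).1 w (hsub₂ hwm).1
                have hRzw : R z * R w = (w - z)⁻¹ • (R z - R w) := by
                  rw [hres z (hmem₁ z hz) w (hmem₂ w hwm), inv_smul_smul₀ hwz]
                rw [smul_mul_assoc, hRzw]
                simp only [smul_smul, smul_sub]
                congr 1 <;> · congr 1; ring
  -- the second term vanishes for each w
  have key2 : (2 * Real.pi * Complex.I : ℂ) • (2 * Real.pi * Complex.I : ℂ) • (b k * c l) =
      ∮ w in C(w₂, r₂), ∮ z in C(w₁, r₁),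
        ((z - w₁) ^ (k - 1) * ((w - w₂) ^ (l - 1) * (w - z)⁻¹)) • R z := by
    rw [key]
    refine circleIntegral.integral_congr hr₂.le fun w hwm => ?_
    have hwU₂ : w ∈ U₂ := (hsub₂ hwm).1
    have hAi : CircleIntegrable
        (fun z => ((z - w₁) ^ (k - 1) * ((w - w₂) ^ (l - 1) * (w - z)⁻¹)) • R z) w₁ r₁ := by
      refine (ContinuousOn.smul ?_ (hRc₁.mono hsub₁)).circleIntegrable hr₁.le
      refine (((continuous_id.sub continuous_const).pow _).continuousOn).mul
        (continuousOn_const.mul (ContinuousOn.inv₀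
          ((continuous_const.sub continuous_id).continuousOn) fun z hz => ?_))
      exact hne12 z (hball₁ (sphere_subset_closedBall hz)) w hwU₂
    have hBi : CircleIntegrable
        (fun z => ((z - w₁) ^ (k - 1) * (w - z)⁻¹) • ((w - w₂) ^ (l - 1) • R w)) w₁ r₁ := by
      refine (ContinuousOn.smul ?_ continuousOn_const).circleIntegrable hr₁.le
      refine (((continuous_id.sub continuous_const).pow _).continuousOn).mul
        (ContinuousOn.inv₀ ((continuous_const.sub continuous_id).continuousOn) fun z hz => ?_)
      exact hne12 z (hball₁ (sphere_subset_closedBall hz)) w hwU₂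
    rw [circleIntegral.integral_sub hAi hBi]
    have hBzero : (∮ z in C(w₁, r₁),
        ((z - w₁) ^ (k - 1) * (w - z)⁻¹) • ((w - w₂) ^ (l - 1) • R w)) = 0 := by
      rw [circleIntegral.integral_smul_const]
      have : (∮ z in C(w₁, r₁), (z - w₁) ^ (k - 1) * (w - z)⁻¹) = 0 := by
        refine circleIntegral_eq_zero_of_differentiable_on_off_countable hr₁.le
          Set.countable_empty ?_ ?_
        · refine (((continuous_id.sub continuous_const).pow _).continuousOn).mul
            (ContinuousOn.inv₀ ((continuous_const.sub continuous_id).continuousOn)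
              fun z hz => hne12 z (hball₁ hz) w hwU₂)
        · intro z hz
          refine ((differentiableAt_id.sub_const w₁).pow _).mul
            (((differentiableAt_const w).sub differentiableAt_id).inv ?_)
          exact hne12 z (hball₁ (ball_subset_closedBall hz.1)) w hwU₂
      rw [this, zero_smul]
    rw [hBzero, sub_zero]
  -- Fubini and the inner w-integral vanishes
  have hswap : (∮ w in C(w₂, r₂), ∮ z in C(w₁, r₁),
        ((z - w₁) ^ (k - 1) * ((w - w₂) ^ (l - 1) * (w - z)⁻¹)) • R z) =
      ∮ z in C(w₁, r₁), ∮ w in C(w₂, r₂),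
        ((z - w₁) ^ (k - 1) * ((w - w₂) ^ (l - 1) * (w - z)⁻¹)) • R z := by
    refine circleIntegral_swap w₁ w₂ r₁ r₂
      (fun z w => ((z - w₁) ^ (k - 1) * ((w - w₂) ^ (l - 1) * (w - z)⁻¹)) • R z) ?_
    have hZ : Continuous (fun p : ℝ × ℝ => circleMap w₁ r₁ p.2) :=
      (continuous_circleMap _ _).comp continuous_snd
    have hW : Continuous (fun p : ℝ × ℝ => circleMap w₂ r₂ p.1) :=
      (continuous_circleMap _ _).comp continuous_fst
    have hRZ : Continuous (fun p : ℝ × ℝ => R (circleMap w₁ r₁ p.2)) :=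
      hRc₁.comp_continuous hZ fun p => hsub₁ (circleMap_mem_sphere w₁ hr₁.le p.2)
    have hinv : Continuous (fun p : ℝ × ℝ =>
        (circleMap w₂ r₂ p.1 - circleMap w₁ r₁ p.2)⁻¹) := by
      refine (hW.sub hZ).inv₀ fun p => ?_
      exact hne12 _ (hball₁ (sphere_subset_closedBall (circleMap_mem_sphere w₁ hr₁.le p.2)))
        _ (hball₂ (sphere_subset_closedBall (circleMap_mem_sphere w₂ hr₂.le p.1)))
    exact (((hZ.sub continuous_const).pow _).mul
      (((hW.sub continuous_const).pow _).mul hinv)).smul hRZ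
  have hinner : ∀ z ∈ sphere w₁ r₁, (∮ w in C(w₂, r₂),
      ((z - w₁) ^ (k - 1) * ((w - w₂) ^ (l - 1) * (w - z)⁻¹)) • R z) = 0 := by
    intro z hz
    have hzU₁ : z ∈ U₁ := (hsub₁ hz).1
    have hEq : Set.EqOn
        (fun w => ((z - w₁) ^ (k - 1) * ((w - w₂) ^ (l - 1) * (w - z)⁻¹)) • R z)
        (fun w => ((w - w₂) ^ (l - 1) * (w - z)⁻¹) • ((z - w₁) ^ (k - 1) • R z))
        (sphere w₂ r₂) := by
      intro w _
      simp only [smul_smul]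
      congr 1
      ring
    rw [circleIntegral.integral_congr hr₂.le hEq, circleIntegral.integral_smul_const]
    have : (∮ w in C(w₂, r₂), (w - w₂) ^ (l - 1) * (w - z)⁻¹) = 0 := by
      refine circleIntegral_eq_zero_of_differentiable_on_off_countable hr₂.le
        Set.countable_empty ?_ ?_
      · refine (((continuous_id.sub continuous_const).pow _).continuousOn).mul
          (ContinuousOn.inv₀ ((continuous_id.sub continuous_const).continuousOn)
            fun w hwm => ?_)
        exact hne12 z hzU₁ w (hball₂ hwm)
      · intro w hwm
        refine ((differentiableAt_id.sub_const w₂).pow _).mul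
          ((differentiableAt_id.sub_const z).inv ?_)
        exact hne12 z hzU₁ w (hball₂ (ball_subset_closedBall hwm.1))
    rw [this, zero_smul]
  have hfinal : (2 * Real.pi * Complex.I : ℂ) • (2 * Real.pi * Complex.I : ℂ) •
      (b k * c l) = 0 := by
    rw [key2, hswap]
    rw [circleIntegral.integral_congr hr₁.le fun z hz => hinner z hz]
    simp [circleIntegral]
  rw [smul_smul] at hfinal
  exact (smul_eq_zero.mp hfinal).resolve_left
    (mul_ne_zero Complex.two_pi_I_ne_zero Complex.two_pi_I_ne_zero)
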